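/- Every first-countable, locally path-connected topological space is path-inductive. -/

import Mathlib

/-- A topological space is *path-inductive* if a set is open iff its preimage under
every path (continuous map from the unit interval) is open. -/
def PathInductive (X : Type*) [TopologicalSpace X] : Prop :=
  ∀ U : Set X, IsOpen U ↔ ∀ γ : unitInterval → X, Continuous γ → IsOpen (γ ⁻¹' U)

open Set Filter Topology

lemma exists_antitone_pc {X : Type*} [TopologicalSpace X] [LocallyPathConnectedSpace X] (x : X)
    (b : ℕ → Set X) (hb : ∀ n, b n ∈ 𝓝 x) :
    ∃ V : ℕ → Set X, (∀ n, V n ∈ 𝓝 x ∧ IsPathConnected (V n) ∧ V n ⊆ b n) ∧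
      ∀ n, V (n + 1) ⊆ V n := by
  have key : ∀ s : Set X, s ∈ 𝓝 x → ∃ V, V ∈ 𝓝 x ∧ IsPathConnected V ∧ V ⊆ s := by
    intro s hs
    rcases (path_connected_basis x).mem_iff.mp hs with ⟨V, ⟨hV1, hV2⟩, hV3⟩
    exact ⟨V, hV1, hV2, hV3⟩
  choose F hF1 hF2 hF3 using key
  let g : ℕ → {s : Set X // s ∈ 𝓝 x} := fun n => Nat.rec
    ⟨F (b 0) (hb 0), hF1 _ _⟩
    (fun n p => ⟨F (p.1 ∩ b (n + 1)) (Filter.inter_mem p.2 (hb (n + 1))), hF1 _ _⟩) n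
  refine ⟨fun n => (g n).1, fun n => ⟨(g n).2, ?_, ?_⟩, fun n => ?_⟩
  · cases n with
    | zero => exact hF2 _ _
    | succ n => exact hF2 _ _
  · cases n with
    | zero => exact hF3 _ _
    | succ n => exact (hF3 _ _).trans inter_subset_right
  · exact (hF3 _ _).trans inter_subset_left



lemma myGlue {α β : Type*} [TopologicalSpace α] [TopologicalSpace β] {f : α → β} {s t : Set α}
    (hs : IsClosed s) (ht : IsClosed t) (hfs : ContinuousOn f s) (hft : ContinuousOn f t) :
    ContinuousOn f (s ∪ t) := by
  intro x hx
  rw [continuousWithinAt_union]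
  constructor
  · by_cases h : x ∈ s
    · exact hfs x h
    · exact continuousWithinAt_of_notMem_closure (by rwa [hs.closure_eq])
  · by_cases h : x ∈ t
    · exact hft x h
    · exact continuousWithinAt_of_notMem_closure (by rwa [ht.closure_eq])

lemma main_aux {X : Type*} [TopologicalSpace X] (U : Set X) (x : X) (b V : ℕ → Set X) (c : ℕ → X)
    (hb : (𝓝 x).HasAntitoneBasis b)
    (hVb : ∀ n, V n ⊆ b n) (hVanti : ∀ m n, m ≤ n → V n ⊆ V m)
    (r : ∀ n, Path (c (n + 1)) (c n)) (hr : ∀ n t, r n t ∈ V n)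
    (hcU : ∀ n, c n ∉ U) (hxU : x ∈ U)
    (h : ∀ γ : unitInterval → X, Continuous γ → IsOpen (γ ⁻¹' U)) : False := by
  classical
  set a : ℕ → ℝ := fun n => ((n : ℝ) + 1)⁻¹ with ha
  have hapos : ∀ n, 0 < a n := fun n => by positivity
  have halt : ∀ n, a (n + 1) < a n := by
    intro n
    apply inv_strictAnti₀ (by positivity)
    push_cast; linarith
  have hale1 : ∀ n, a n ≤ 1 := by
    intro n
    rw [ha]
    apply inv_le_one_of_one_le₀
    push_cast; linarith
  have hane : ∀ n, a n - a (n + 1) ≠ 0 := fun n => ne_of_gt (by linarith [halt n])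
  set E : ℕ → ℝ → ℝ := fun n t => (t - a (n + 1)) / (a n - a (n + 1)) with hE
  set f : ℝ → X := fun t =>
    if h : 0 < t ∧ t < 1 then r (⌊t⁻¹⌋₊ - 1) (Set.projIcc 0 1 zero_le_one (E (⌊t⁻¹⌋₊ - 1) t))
    else if t ≤ 0 then x else c 0 with hf
  -- projIcc evaluations
  have hproj0 : Set.projIcc (0:ℝ) 1 zero_le_one 0 = 0 := by
    apply Subtype.ext; simp
  have hproj1 : Set.projIcc (0:ℝ) 1 zero_le_one 1 = 1 := by
    apply Subtype.ext; simp
  -- the piece lemma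
  have hpiece : ∀ n t, a (n + 1) ≤ t → t ≤ a n →
      f t = r n (Set.projIcc 0 1 zero_le_one (E n t)) := by
    intro n t h1 h2
    have ht0 : 0 < t := lt_of_lt_of_le (hapos (n + 1)) h1
    by_cases ht1 : t < 1
    · have h2' : ((n : ℝ) + 1) ≤ t⁻¹ := by
        have := inv_anti₀ ht0 h2
        rwa [ha, inv_inv] at this
      have h1' : t⁻¹ ≤ ((n : ℝ) + 2) := by
        have := inv_anti₀ (hapos (n + 1)) h1
        rw [ha, inv_inv] at this
        push_cast at this
        linarith
      have hfl_lo : n + 1 ≤ ⌊t⁻¹⌋₊ := Nat.le_floor (by push_cast; exact h2')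
      have hfl_hi : ⌊t⁻¹⌋₊ ≤ n + 2 := by
        have : ⌊t⁻¹⌋₊ ≤ ⌊((n : ℝ) + 2)⌋₊ := Nat.floor_le_floor h1'
        rwa [show ((n : ℝ) + 2) = ((n + 2 : ℕ) : ℝ) by push_cast; ring, Nat.floor_natCast] at this
      have hkey : (0 : ℝ) < t ∧ t < 1 := ⟨ht0, ht1⟩
      have hcase : ⌊t⁻¹⌋₊ = n + 1 ∨ ⌊t⁻¹⌋₊ = n + 2 := by omega
      rcases hcase with hk | hk
      · have hk' : ⌊t⁻¹⌋₊ - 1 = n := by omega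
        simp only [hf]
        rw [dif_pos hkey, hk']
      · -- then t = a (n+1)
        have hge : ((n : ℝ) + 2) ≤ t⁻¹ := by
          have := Nat.floor_le (a := t⁻¹) (by positivity)
          rw [hk] at this
          push_cast at this
          linarith
        have hinv : t⁻¹ = ((n : ℝ) + 2) := le_antisymm h1' hge
        have hteq : t = a (n + 1) := by
          rw [ha]
          push_cast
          rw [show ((n : ℝ) + 1 + 1) = (n : ℝ) + 2 by ring, ← hinv, inv_inv]
        have hE1 : E (n + 1) t = 1 := by
          rw [hE, hteq]
          exact div_self (hane (n + 1))
        have hE0 : E n t = 0 := by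
          simp only [hE]
          rw [hteq, sub_self, zero_div]
        have hk' : ⌊t⁻¹⌋₊ - 1 = n + 1 := by omega
        simp only [hf]
        rw [dif_pos hkey, hk']
        rw [hE1, hE0, hproj0, hproj1, Path.target, Path.source]
    · -- t = 1, and n = 0
      have ht1' : t = 1 := le_antisymm (h2.trans (hale1 n)) (not_lt.mp ht1)
      have hn0 : n = 0 := by
        have h2' := h2
        rw [ht1'] at h2'
        simp only [ha] at h2'
        by_contra hn
        have hn1 : 1 ≤ n := Nat.one_le_iff_ne_zero.mpr hn
        have hcast : (1 : ℝ) ≤ (n : ℝ) := by exact_mod_cast hn1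
        have : ((n : ℝ) + 1)⁻¹ ≤ (2 : ℝ)⁻¹ := by
          apply inv_anti₀ (by norm_num)
          linarith
        linarith
      subst hn0
      have hE1 : E 0 t = 1 := by
        rw [hE, ht1', ha]
        norm_num
      have hnot : ¬ ((0 : ℝ) < t ∧ t < 1) := fun hh => ht1 hh.2
      simp only [hf]
      rw [dif_neg hnot, if_neg (by linarith : ¬ t ≤ 0), hE1, hproj1, Path.target]
  -- continuity on the pieces
  have hcIcc : ∀ n, ContinuousOn f (Icc (a (n + 1)) (a n)) := by
    intro n
    have hg : Continuous fun t => r n (Set.projIcc 0 1 zero_le_one (E n t)) := by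
      apply (r n).continuous.comp
      apply continuous_projIcc.comp
      simp only [hE]
      exact (continuous_id.sub continuous_const).div_const _
    exact hg.continuousOn.congr fun t ht => hpiece n t ht.1 ht.2
  have hIci : ∀ n, ContinuousOn f (Ici (a n)) := by
    intro n
    induction n with
    | zero =>
      have h1 : a 0 = 1 := by rw [ha]; norm_num
      have heq : EqOn f (fun _ => c 0) (Ici (a 0)) := by
        intro t ht
        simp only [mem_Ici, h1] at ht
        simp only [hf]
        rw [dif_neg (by intro hh; linarith [hh.2]), if_neg (by linarith)]
      exact continuousOn_const.congr heq
    | succ n ih =>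
      have := myGlue isClosed_Icc isClosed_Ici (hcIcc n) ih
      rwa [Icc_union_Ici_eq_Ici (le_of_lt (halt n))] at this
  have hf0 : f 0 = x := by
    simp only [hf]
    rw [dif_neg (by norm_num), if_pos le_rfl]
  -- global continuity
  have hfc : Continuous f := by
    rw [continuous_iff_continuousAt]
    intro t
    rcases lt_trichotomy t 0 with ht | ht | ht
    · have hev : (fun _ => x) =ᶠ[𝓝 t] f := by
        filter_upwards [Iio_mem_nhds ht] with u hu
        simp only [hf]
        rw [dif_neg (fun hh => absurd hh.1 (not_lt.mpr (le_of_lt hu))), if_pos (le_of_lt hu)]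
      exact continuousAt_const.congr hev
    · subst ht
      rw [ContinuousAt, hf0]
      apply hb.toHasBasis.tendsto_right_iff.mpr
      intro m _
      have hmem : Ioo (-(a m)) (a m) ∈ 𝓝 (0 : ℝ) := Ioo_mem_nhds (by linarith [hapos m]) (hapos m)
      filter_upwards [hmem] with t ht
      by_cases ht0 : t ≤ 0
      · simp only [hf]
        rw [dif_neg (fun hh => absurd hh.1 (not_lt.mpr ht0)), if_pos ht0]
        exact mem_of_mem_nhds (hb.toHasBasis.mem_of_mem trivial)
      · push_neg at ht0
        have htm : t < a m := ht.2
        have ht1 : t < 1 := lt_of_lt_of_le htm (hale1 m)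
        have hflm : m + 1 ≤ ⌊t⁻¹⌋₊ := by
          apply Nat.le_floor
          have := inv_strictAnti₀ ht0 htm
          rw [ha, inv_inv] at this
          push_cast
          linarith
        simp only [hf]
        rw [dif_pos ⟨ht0, ht1⟩]
        exact hVb m (hVanti m (⌊t⁻¹⌋₊ - 1) (by omega) (hr _ _))
    · obtain ⟨n, hn⟩ : ∃ n : ℕ, a n < t := by
        obtain ⟨n, hn⟩ := exists_nat_gt t⁻¹
        refine ⟨n, ?_⟩
        rw [ha]
        exact inv_lt_of_inv_lt₀ ht (by push_cast; linarith)
      exact (hIci n).continuousAt (mem_of_superset (Ioi_mem_nhds hn) Ioi_subset_Ici_self)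
  -- build the path and derive the contradiction
  have hγc : Continuous fun u : unitInterval => f u.val := hfc.comp continuous_subtype_val
  have hop := h _ hγc
  have h0γ : (0 : unitInterval) ∈ (fun u : unitInterval => f u.val) ⁻¹' U := by
    show f ((0 : unitInterval) : ℝ) ∈ U
    rw [show ((0 : unitInterval) : ℝ) = 0 from rfl, hf0]
    exact hxU
  have hamem : ∀ n, a (n + 1) ∈ Icc (0 : ℝ) 1 := fun n => ⟨(hapos _).le, hale1 _⟩
  have hse : ∀ n : ℕ,
      (fun u : unitInterval => f u.val) (Set.projIcc (0:ℝ) 1 zero_le_one (a (n + 1))) = c (n + 1) := by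
    intro n
    have hpr : Set.projIcc (0:ℝ) 1 zero_le_one (a (n + 1)) = ⟨a (n + 1), hamem n⟩ :=
      Set.projIcc_of_mem _ (hamem n)
    show f ((Set.projIcc (0:ℝ) 1 zero_le_one (a (n + 1)) : unitInterval) : ℝ) = c (n + 1)
    rw [hpr]
    show f (a (n + 1)) = c (n + 1)
    rw [hpiece n (a (n + 1)) le_rfl (le_of_lt (halt n))]
    have hE0 : E n (a (n + 1)) = 0 := by
      simp only [hE]
      rw [sub_self, zero_div]
    rw [hE0, hproj0, Path.source]
  have htend : Tendsto (fun n : ℕ => Set.projIcc (0:ℝ) 1 zero_le_one (a (n + 1))) atTop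
      (𝓝 (0 : unitInterval)) := by
    have h1 : Tendsto (fun n : ℕ => a (n + 1)) atTop (𝓝 0) := by
      have h2 := (tendsto_one_div_add_atTop_nhds_zero_nat (𝕜 := ℝ)).comp (tendsto_add_atTop_nat 1)
      refine h2.congr fun n => ?_
      simp [ha, one_div]
    have h2 : Tendsto (fun n : ℕ => Set.projIcc (0:ℝ) 1 zero_le_one (a (n + 1))) atTop
        (𝓝 (Set.projIcc (0:ℝ) 1 zero_le_one 0)) := (continuous_projIcc.tendsto 0).comp h1
    rwa [hproj0] at h2
  have hev : ∀ᶠ n in atTop,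
      Set.projIcc (0:ℝ) 1 zero_le_one (a (n + 1)) ∈ (fun u : unitInterval => f u.val) ⁻¹' U :=
    htend (hop.mem_nhds h0γ)
  obtain ⟨n, hn⟩ := hev.exists
  exact hcU (n + 1) (by rwa [← hse n])

theorem stmt_7 (X : Type*) [TopologicalSpace X]
    [FirstCountableTopology X] [LocallyPathConnectedSpace X] :
    PathInductive X := by
  intro U
  constructor
  · exact fun hU γ hγ => hU.preimage hγ
  · intro h
    rw [isOpen_iff_mem_nhds]
    intro x hxU
    by_contra hx
    obtain ⟨b, hb⟩ := (𝓝 x).exists_antitone_basis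
    obtain ⟨V, hV, hVstep⟩ := exists_antitone_pc x b fun n => hb.toHasBasis.mem_of_mem trivial
    have hVanti : ∀ m n, m ≤ n → V n ⊆ V m := fun m n hmn =>
      antitone_nat_of_succ_le hVstep hmn
    have hcn : ∀ n, ∃ y, y ∈ V n ∧ y ∉ U := by
      intro n
      by_contra hno
      push_neg at hno
      exact hx (Filter.mem_of_superset (hV n).1 fun y hy => hno y hy)
    choose c hcV hcU using hcn
    have hjoined : ∀ n, JoinedIn (V n) (c (n + 1)) (c n) :=
      fun n => (hV n).2.1.joinedIn _ (hVstep n (hcV (n + 1))) _ (hcV n)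
    exact main_aux U x b V c hb (fun n => (hV n).2.2) hVanti
      (fun n => (hjoined n).somePath) (fun n t => (hjoined n).somePath_mem t) hcU hxU h
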